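/- Let M be a positive integer and let X and Y be disjoint subsets of {1, …, M} such that #X = #Y + l with l ≥ 0 a natural number. Then for every natural number k₁, the following identity holds in ℚ(q): the sum, over all ordered partitions of X into subsets X₁ and X₂ with #X₁ = k₁, of q^{d(X₁,X₂) + d(Y,X₁)}, equals the sum over all natural numbers j₂ (equivalently, over 0 ≤ j₂ ≤ k₁, since all other terms vanish) of ⟨l choose k₁−j₂, l−k₁+j₂⟩_q times the sum, over all ordered partitions of Y into subsets Y₁ and Y₂ with #Y₂ = j₂, of q^{d(Y₁,Y₂) + d(Y₂,X)}. -/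

import Mathlib

noncomputable section

/-- The indeterminate `q` in the field `ℚ(q)` of rational functions over `ℚ`. -/
def q : RatFunc ℚ := RatFunc.X

/-- The balanced quantum integer `[n]_q = (q^n - q^{-n})/(q - q^{-1})`. -/
def qInt (n : ℕ) : RatFunc ℚ := (q ^ (n : ℤ) - q ^ (-(n : ℤ))) / (q - q⁻¹)

/-- The quantum factorial `[n]_q! = ∏_{j=1}^n [j]_q`. -/
def qFact (n : ℕ) : RatFunc ℚ := ∏ j ∈ Finset.range n, qInt (j + 1)

/-- The balanced quantum binomial `⟨a+b choose a,b⟩_q`, defined for integers `a`, `b`: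
it is `0` if `a < 0` or `b < 0`, and `[a+b]_q! / ([a]_q! · [b]_q!)` otherwise. -/
def qBinom (a b : ℤ) : RatFunc ℚ :=
  if a < 0 ∨ b < 0 then 0 else qFact (a + b).toNat / (qFact a.toNat * qFact b.toNat)

/-- The degree `d(Y,Z) = #{(y,z) ∈ Y × Z : y < z} − #{(y,z) ∈ Y × Z : y > z}`
of a pair of (disjoint) finite sets of integers. -/
def deg (Y Z : Finset ℤ) : ℤ :=
  (((Y ×ˢ Z).filter fun p => p.1 < p.2).card : ℤ) -
    (((Y ×ˢ Z).filter fun p => p.2 < p.1).card : ℤ)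

lemma q_ne_zero : q ≠ 0 := RatFunc.X_ne_zero

lemma q_pow_ne_one {m : ℕ} (hm : m ≠ 0) : q ^ m ≠ 1 := by
  intro h
  have h2 : (algebraMap (Polynomial ℚ) (RatFunc ℚ)) (Polynomial.X ^ m) =
      (algebraMap (Polynomial ℚ) (RatFunc ℚ)) 1 := by
    rw [map_pow, map_one, RatFunc.algebraMap_X]
    exact h
  have h3 := RatFunc.algebraMap_injective ℚ h2
  have := congrArg Polynomial.natDegree h3
  simp [Polynomial.natDegree_X_pow] at this
  exact hm this

lemma q_zpow_ne_one {m : ℤ} (hm : m ≠ 0) : q ^ m ≠ 1 := by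
  rcases lt_trichotomy m 0 with h | h | h
  · intro he
    have : q ^ (-m) = 1 := by
      rw [zpow_neg, he, inv_one]
    rw [show (-m) = ((-m).toNat : ℤ) by omega, zpow_natCast] at this
    exact q_pow_ne_one (by omega) this
  · omega
  · intro he
    rw [show m = (m.toNat : ℤ) by omega, zpow_natCast] at he
    exact q_pow_ne_one (by omega) he

lemma q_sub_inv_ne_zero : q - q⁻¹ ≠ 0 := by
  intro h
  have h1 : q = q⁻¹ := sub_eq_zero.mp h
  have h2 : q ^ (2:ℤ) = 1 := by
    rw [show (2:ℤ) = 1 + 1 by norm_num, zpow_add₀ q_ne_zero, zpow_one]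
    nth_rewrite 2 [h1]
    exact mul_inv_cancel₀ q_ne_zero
  exact q_zpow_ne_one (by norm_num) h2

def qIntZ (n : ℤ) : RatFunc ℚ := (q ^ n - q ^ (-n)) / (q - q⁻¹)

lemma qIntZ_natCast (n : ℕ) : qIntZ (n : ℤ) = qInt n := rfl

@[simp] lemma qIntZ_zero : qIntZ 0 = 0 := by simp [qIntZ]

lemma qIntZ_add (a b : ℤ) : qIntZ (a + b) = q ^ (-b) * qIntZ a + q ^ a * qIntZ b := by
  rw [qIntZ, qIntZ, qIntZ, ← mul_div_assoc, ← mul_div_assoc, ← add_div]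
  congr 1
  rw [neg_add, zpow_add₀ q_ne_zero, zpow_add₀ q_ne_zero]
  ring

lemma qIntZ_ne_zero {n : ℤ} (hn : n ≠ 0) : qIntZ n ≠ 0 := by
  rw [qIntZ]
  apply div_ne_zero _ q_sub_inv_ne_zero
  intro h
  have h1 : q ^ n = q ^ (-n) := sub_eq_zero.mp h
  have h2 : q ^ (n + n) = 1 := by
    rw [zpow_add₀ q_ne_zero]
    nth_rewrite 2 [h1]
    rw [← zpow_add₀ q_ne_zero, add_neg_cancel, zpow_zero]
  exact q_zpow_ne_one (by omega) h2

lemma qInt_succ_ne_zero (n : ℕ) : qInt (n + 1) ≠ 0 := by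
  rw [← qIntZ_natCast]
  exact qIntZ_ne_zero (by positivity)

lemma qFact_ne_zero (n : ℕ) : qFact n ≠ 0 :=
  Finset.prod_ne_zero_iff.mpr fun i _ => qInt_succ_ne_zero i

def qbin (l : ℤ) (k : ℕ) : RatFunc ℚ := (∏ i ∈ Finset.range k, qIntZ (l - i)) / qFact k

@[simp] lemma qbin_zero (l : ℤ) : qbin l 0 = 1 := by simp [qbin, qFact]

lemma qbin_self_zero {l : ℤ} {k : ℕ} (h0 : 0 ≤ l) (hlk : l < k) : qbin l k = 0 := by
  rw [qbin]
  apply div_eq_zero_iff.mpr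
  left
  apply Finset.prod_eq_zero (i := l.toNat)
  · simp only [Finset.mem_range]; omega
  · rw [Int.toNat_of_nonneg h0]
    simp

lemma qFact_succ (k : ℕ) : qFact (k + 1) = qFact k * qIntZ ((k : ℤ) + 1) := by
  rw [qFact, Finset.prod_range_succ, ← qFact, ← qIntZ_natCast]
  norm_num

lemma qbin_pascal (l : ℤ) (k : ℕ) :
    qbin l (k + 1) = q ^ ((k : ℤ) + 1) * qbin (l - 1) (k + 1) + q ^ ((k : ℤ) + 1 - l) * qbin (l - 1) k := by
  have hF : qFact k ≠ 0 := qFact_ne_zero k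
  have hI : qIntZ ((k : ℤ) + 1) ≠ 0 := qIntZ_ne_zero (by positivity)
  have hN1 : (∏ i ∈ Finset.range (k + 1), qIntZ (l - i)) =
      (∏ i ∈ Finset.range k, qIntZ ((l - 1) - i)) * qIntZ l := by
    rw [Finset.prod_range_succ']
    simp only [Nat.cast_add, Nat.cast_one, Nat.cast_zero, sub_zero]
    congr 1
    apply Finset.prod_congr rfl
    intro i _
    congr 1
    push_cast
    ring
  have hN2 : (∏ i ∈ Finset.range (k + 1), qIntZ ((l - 1) - i)) =
      (∏ i ∈ Finset.range k, qIntZ ((l - 1) - i)) * qIntZ (l - 1 - k) := by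
    rw [Finset.prod_range_succ]
  have key : qIntZ l = q ^ ((k : ℤ) + 1) * qIntZ (l - 1 - (k : ℤ)) + q ^ ((k : ℤ) + 1 - l) * qIntZ ((k : ℤ) + 1) := by
    have h := qIntZ_add ((k : ℤ) + 1) (l - (k : ℤ) - 1)
    rw [show ((k : ℤ) + 1 + (l - (k : ℤ) - 1)) = l by ring] at h
    rw [show (-(l - (k : ℤ) - 1)) = (k : ℤ) + 1 - l by ring] at h
    rw [h, show l - 1 - (k : ℤ) = l - (k : ℤ) - 1 by ring]
    ring
  rw [qbin, qbin, qbin, hN1, hN2, qFact_succ]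
  rw [key]
  field_simp


def esign (a b : ℤ) : ℤ := (if a < b then 1 else 0) - (if b < a then 1 else 0)

lemma deg_eq (A B : Finset ℤ) : deg A B = ∑ x ∈ A, ∑ y ∈ B, esign x y := by
  rw [deg, ← Finset.sum_product']
  simp only [esign]
  rw [Finset.sum_sub_distrib, Finset.sum_boole, Finset.sum_boole]

@[simp] lemma deg_empty_left (B : Finset ℤ) : deg ∅ B = 0 := by simp [deg_eq]

@[simp] lemma deg_empty_right (A : Finset ℤ) : deg A ∅ = 0 := by simp [deg_eq]

lemma deg_insert_right {a : ℤ} {B : Finset ℤ} (h : a ∉ B) {A : Finset ℤ}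
    (hlt : ∀ x ∈ A, x < a) : deg A (insert a B) = deg A B + A.card := by
  rw [deg_eq, deg_eq]
  calc ∑ x ∈ A, ∑ y ∈ insert a B, esign x y
      = ∑ x ∈ A, (esign x a + ∑ y ∈ B, esign x y) :=
        Finset.sum_congr rfl fun x _ => Finset.sum_insert h
    _ = ∑ x ∈ A, (1 + ∑ y ∈ B, esign x y) := Finset.sum_congr rfl fun x hx => by
        simp [esign, hlt x hx, not_lt.2 (hlt x hx).le]
    _ = (∑ x ∈ A, ∑ y ∈ B, esign x y) + A.card := by
        rw [Finset.sum_add_distrib, Finset.sum_const]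
        simp [add_comm]

lemma deg_insert_left {a : ℤ} {A : Finset ℤ} (h : a ∉ A) {B : Finset ℤ}
    (hlt : ∀ y ∈ B, y < a) : deg (insert a A) B = deg A B - B.card := by
  rw [deg_eq, deg_eq, Finset.sum_insert h]
  have : ∑ y ∈ B, esign a y = -B.card := by
    rw [Finset.sum_congr rfl (fun y hy => show esign a y = -1 by
      simp [esign, hlt y hy, not_lt.2 (hlt y hy).le])]
    simp
  rw [this]
  ring

lemma sum_powersetCard_insert {α β : Type*} [DecidableEq α] [AddCommMonoid β]
    {a : α} {s : Finset α} (h : a ∉ s) (n : ℕ) (f : Finset α → β) :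
    ∑ t ∈ (insert a s).powersetCard (n + 1), f t =
      ∑ t ∈ s.powersetCard (n + 1), f t + ∑ t ∈ s.powersetCard n, f (insert a t) := by
  rw [show n + 1 = n.succ from rfl, Finset.powersetCard_succ_insert h, Finset.sum_union, Finset.sum_image]
  · intro t ht u hu he
    have ht' := (Finset.mem_powersetCard.mp ht).1
    have hu' := (Finset.mem_powersetCard.mp hu).1
    have hat : a ∉ t := fun hc => h (ht' hc)
    have hau : a ∉ u := fun hc => h (hu' hc)
    have := congrArg (Finset.erase · a) he
    simpa [Finset.erase_insert hat, Finset.erase_insert hau] using this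
  · rw [Finset.disjoint_left]
    intro t ht htim
    obtain ⟨u, _, rfl⟩ := Finset.mem_image.mp htim
    have := (Finset.mem_powersetCard.mp ht).1
    exact h (this (Finset.mem_insert_self a u))

lemma prod_qIntZ_eq (l : ℕ) : ∀ k : ℕ, k ≤ l →
    (∏ i ∈ Finset.range k, qIntZ ((l:ℤ) - i)) * qFact (l - k) = qFact l := by
  intro k
  induction k with
  | zero => simp
  | succ k ihk =>
    intro h
    obtain ⟨m, hm⟩ : ∃ m, l - k = m + 1 := ⟨l - k - 1, by omega⟩
    have h2 : qFact (m + 1) = qFact m * qIntZ ((l:ℤ) - k) := by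
      rw [qFact_succ, show ((m:ℕ):ℤ) + 1 = (l:ℤ) - (k:ℤ) by omega]
    rw [Finset.prod_range_succ, show l - (k+1) = m by omega]
    calc (∏ i ∈ Finset.range k, qIntZ ((l:ℤ) - i)) * qIntZ ((l:ℤ) - k) * qFact m
        = (∏ i ∈ Finset.range k, qIntZ ((l:ℤ) - i)) * qFact (m + 1) := by rw [h2]; ring
      _ = (∏ i ∈ Finset.range k, qIntZ ((l:ℤ) - i)) * qFact (l - k) := by rw [hm]
      _ = qFact l := ihk (by omega)

lemma qbin_eq_qBinom (l k : ℕ) : qbin (l:ℤ) k = qBinom (k:ℤ) ((l:ℤ) - (k:ℤ)) := by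
  by_cases h : k ≤ l
  · rw [qBinom, if_neg (by push_cast; omega)]
    rw [show ((k:ℤ) + ((l:ℤ) - (k:ℤ))).toNat = l by omega,
      show ((k:ℤ)).toNat = k by omega, show ((l:ℤ) - (k:ℤ)).toNat = l - k by omega]
    rw [qbin, ← prod_qIntZ_eq l k h]
    rw [div_eq_div_iff (qFact_ne_zero k) (mul_ne_zero (qFact_ne_zero k) (qFact_ne_zero (l-k)))]
    ring
  · rw [qbin_self_zero (by positivity) (by push_cast; omega)]
    rw [qBinom, if_pos (Or.inr (by omega))]

lemma sumA (l : ℤ) (k : ℕ) (T : ℕ → RatFunc ℚ) :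
    q ^ ((k:ℤ)+1) * ∑ j ∈ Finset.range (k+2), qbin (l-1) (k+1-j) * (q ^ (-(j:ℤ)) * T j)
    + q ^ ((k:ℤ)+1-l) * ∑ j ∈ Finset.range (k+1), qbin (l-1) (k-j) * (q ^ (-(j:ℤ)) * T j)
    = ∑ j ∈ Finset.range (k+2), qbin l (k+1-j) * T j := by
  have main : ∑ j ∈ Finset.range (k+2), (qbin l (k+1-j) * T j
        - q ^ ((k:ℤ)+1) * (qbin (l-1) (k+1-j) * (q ^ (-(j:ℤ)) * T j)))
      = ∑ j ∈ Finset.range (k+1), q ^ ((k:ℤ)+1-l) * (qbin (l-1) (k-j) * (q ^ (-(j:ℤ)) * T j)) := by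
    rw [Finset.sum_range_succ]
    have hlast : qbin l (k+1-(k+1)) * T (k+1)
        - q ^ ((k:ℤ)+1) * (qbin (l-1) (k+1-(k+1)) * (q ^ (-((k+1:ℕ):ℤ)) * T (k+1))) = 0 := by
      simp only [Nat.sub_self, qbin_zero, one_mul]
      rw [← mul_assoc, ← zpow_add₀ q_ne_zero,
        show ((k:ℤ)+1) + (-((k+1:ℕ):ℤ)) = 0 by push_cast; ring, zpow_zero, one_mul, sub_self]
    rw [hlast, add_zero]
    refine Finset.sum_congr rfl fun j hj => ?_
    have hj' : j ≤ k := by simpa [Nat.lt_succ] using Finset.mem_range.mp hj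
    set m := k - j with hm
    have e0 : k + 1 - j = m + 1 := by omega
    have e1 : q ^ ((m:ℤ)+1) = q ^ ((k:ℤ)+1) * q ^ (-(j:ℤ)) := by
      rw [← zpow_add₀ q_ne_zero]; congr 1; omega
    have e2 : q ^ ((m:ℤ)+1-l) = q ^ ((k:ℤ)+1-l) * q ^ (-(j:ℤ)) := by
      rw [← zpow_add₀ q_ne_zero]; congr 1; omega
    rw [e0, qbin_pascal l m, e1, e2]
    ring
  rw [Finset.sum_sub_distrib, ← Finset.mul_sum] at main
  rw [← Finset.mul_sum] at main
  linear_combination -main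

lemma sumB (l : ℤ) (k₁ : ℕ) (T R : ℕ → RatFunc ℚ) (hR0 : R 0 = T 0)
    (hRs : ∀ i : ℕ, R (i+1) = q ^ (-((i:ℤ)+1)) * T (i+1) + q ^ (-l-((i:ℤ)+1)) * T i) :
    q ^ (-(k₁:ℤ)) * ∑ j ∈ Finset.range (k₁+1), qbin (l+1) (k₁-j) * T j
    = ∑ j ∈ Finset.range (k₁+1), qbin l (k₁-j) * R j := by
  have hexp : ∑ j ∈ Finset.range (k₁+1), qbin l (k₁-j) * R j
      = ∑ j ∈ Finset.range (k₁+1), qbin l (k₁-j) * (q ^ (-(j:ℤ)) * T j)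
        + ∑ i ∈ Finset.range k₁, qbin l (k₁-(i+1)) * (q ^ (-l-((i:ℤ)+1)) * T i) := by
    rw [Finset.sum_range_succ' (fun j => qbin l (k₁-j) * R j) k₁,
      Finset.sum_range_succ' (fun j => qbin l (k₁-j) * (q ^ (-(j:ℤ)) * T j)) k₁]
    simp only [hRs, hR0, mul_add]
    rw [Finset.sum_add_distrib]
    simp only [Nat.sub_zero, Nat.cast_zero, neg_zero, zpow_zero, one_mul]
    push_cast
    ring
  have main : ∑ j ∈ Finset.range (k₁+1), (q ^ (-(k₁:ℤ)) * (qbin (l+1) (k₁-j) * T j)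
        - qbin l (k₁-j) * (q ^ (-(j:ℤ)) * T j))
      = ∑ i ∈ Finset.range k₁, qbin l (k₁-(i+1)) * (q ^ (-l-((i:ℤ)+1)) * T i) := by
    rw [Finset.sum_range_succ]
    have hlast : q ^ (-(k₁:ℤ)) * (qbin (l+1) (k₁-k₁) * T k₁)
        - qbin l (k₁-k₁) * (q ^ (-(k₁:ℤ)) * T k₁) = 0 := by
      simp only [Nat.sub_self, qbin_zero, one_mul]
      ring
    rw [hlast, add_zero]
    refine Finset.sum_congr rfl fun j hj => ?_
    have hj' : j < k₁ := Finset.mem_range.mp hj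
    set m := k₁ - (j+1) with hm
    have e0 : k₁ - j = m + 1 := by omega
    have e1 : q ^ (-(k₁:ℤ)) * q ^ ((m:ℤ)+1) = q ^ (-(j:ℤ)) := by
      rw [← zpow_add₀ q_ne_zero]; congr 1; omega
    have e2 : q ^ (-(k₁:ℤ)) * q ^ ((m:ℤ)+1-(l+1)) = q ^ (-l-((j:ℤ)+1)) := by
      rw [← zpow_add₀ q_ne_zero]; congr 1; omega
    have hp := qbin_pascal (l+1) m
    simp only [add_sub_cancel_right] at hp
    rw [e0, hp]
    rw [show qbin l m = qbin l m from rfl]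
    calc q ^ (-(k₁:ℤ)) * ((q ^ ((m:ℤ)+1) * qbin l (m+1) + q ^ ((m:ℤ)+1-(l+1)) * qbin l m) * T j)
          - qbin l (m+1) * (q ^ (-(j:ℤ)) * T j)
        = (q ^ (-(k₁:ℤ)) * q ^ ((m:ℤ)+1) - q ^ (-(j:ℤ))) * (qbin l (m+1) * T j)
          + (q ^ (-(k₁:ℤ)) * q ^ ((m:ℤ)+1-(l+1))) * (qbin l m * T j) := by ring
      _ = qbin l m * (q ^ (-l-((j:ℤ)+1)) * T j) := by rw [e1, e2]; ring
  rw [Finset.sum_sub_distrib, ← Finset.mul_sum] at main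
  rw [hexp]
  linear_combination main

lemma gen : ∀ (n : ℕ) (X Y : Finset ℤ), Disjoint X Y → X.card + Y.card = n → ∀ k₁ : ℕ,
    ∑ X₁ ∈ X.powersetCard k₁, q ^ (deg X₁ (X \ X₁) + deg Y X₁) =
      ∑ j ∈ Finset.range (k₁ + 1), qbin ((X.card : ℤ) - (Y.card : ℤ)) (k₁ - j) *
        ∑ Y₂ ∈ Y.powersetCard j, q ^ (deg (Y \ Y₂) Y₂ + deg Y₂ X) := by
  intro n
  induction n using Nat.strong_induction_on with
  | _ n ih =>
  intro X Y hXY hn k₁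
  cases k₁ with
  | zero =>
    simp [Finset.powersetCard_zero, Finset.sum_range_one]
  | succ k =>
  rcases (X ∪ Y).eq_empty_or_nonempty with hne | hne
  · obtain ⟨hXe, hYe⟩ := Finset.union_eq_empty.mp hne
    subst hXe hYe
    rw [Finset.powersetCard_eq_empty.mpr (by simp), Finset.sum_empty]
    symm
    apply Finset.sum_eq_zero
    intro j hj
    simp only [Finset.card_empty, Nat.cast_zero, sub_zero]
    cases j with
    | zero => rw [qbin_self_zero le_rfl (by exact_mod_cast Nat.succ_pos k)]; rw [zero_mul]
    | succ i =>
      rw [Finset.powersetCard_eq_empty.mpr (by simp), Finset.sum_empty, mul_zero]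
  obtain ⟨a, haU, hamax⟩ : ∃ a ∈ X ∪ Y, ∀ b ∈ X ∪ Y, b ≤ a :=
    ⟨(X ∪ Y).max' hne, (X ∪ Y).max'_mem hne, fun b hb => Finset.le_max' _ b hb⟩
  by_cases haX : a ∈ X
  · -- a ∈ X
    have haY : a ∉ Y := Finset.disjoint_left.mp hXY haX
    set X' := X.erase a with hX'def
    have haX' : a ∉ X' := Finset.notMem_erase a X
    have hXins : X = insert a X' := (Finset.insert_erase haX).symm
    have hcard : X.card = X'.card + 1 := by
      rw [hXins, Finset.card_insert_of_notMem haX']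
    have hltX' : ∀ x ∈ X', x < a := fun x hx =>
      lt_of_le_of_ne (hamax x (Finset.mem_union_left _ (Finset.erase_subset a X hx)))
        (Finset.ne_of_mem_erase hx)
    have hltY : ∀ y ∈ Y, y < a := fun y hy =>
      lt_of_le_of_ne (hamax y (Finset.mem_union_right _ hy)) (fun h => haY (h ▸ hy))
    have hXY' : Disjoint X' Y := Finset.disjoint_of_subset_left (Finset.erase_subset a X) hXY
    have hL : ∑ X₁ ∈ X.powersetCard (k+1), q ^ (deg X₁ (X \ X₁) + deg Y X₁)
        = q ^ ((k:ℤ)+1) * ∑ X₁ ∈ X'.powersetCard (k+1), q ^ (deg X₁ (X' \ X₁) + deg Y X₁)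
          + q ^ ((k:ℤ)+1-((X.card:ℤ) - (Y.card:ℤ))) *
            ∑ X₁ ∈ X'.powersetCard k, q ^ (deg X₁ (X' \ X₁) + deg Y X₁) := by
      rw [hXins, sum_powersetCard_insert haX' k]
      congr 1
      · rw [Finset.mul_sum]
        refine Finset.sum_congr rfl fun X₁ hX₁ => ?_
        obtain ⟨hsub, hcardX₁⟩ := Finset.mem_powersetCard.mp hX₁
        have haX₁ : a ∉ X₁ := fun hc => haX' (hsub hc)
        have hsd : insert a X' \ X₁ = insert a (X' \ X₁) :=
          Finset.insert_sdiff_of_notMem X' haX₁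
        have hna : a ∉ X' \ X₁ := fun hc => haX' (Finset.mem_sdiff.mp hc).1
        have hd : deg X₁ (insert a X' \ X₁) = deg X₁ (X' \ X₁) + X₁.card := by
          rw [hsd]; exact deg_insert_right hna (fun x hx => hltX' x (hsub hx))
        rw [hd, hcardX₁, ← zpow_add₀ q_ne_zero]
        congr 1
        push_cast
        ring
      · rw [Finset.mul_sum]
        refine Finset.sum_congr rfl fun X₁ hX₁ => ?_
        obtain ⟨hsub, hcardX₁⟩ := Finset.mem_powersetCard.mp hX₁
        have haX₁ : a ∉ X₁ := fun hc => haX' (hsub hc)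
        have hsd : insert a X' \ insert a X₁ = X' \ X₁ := by
          ext x
          simp only [Finset.mem_sdiff, Finset.mem_insert, not_or]
          constructor
          · rintro ⟨hx1 | hx2, hx3, hx4⟩
            · exact absurd hx1 hx3
            · exact ⟨hx2, hx4⟩
          · rintro ⟨hx1, hx2⟩
            exact ⟨Or.inr hx1, fun he => haX' (he ▸ hx1), hx2⟩
        have h1 : deg (insert a X₁) (X' \ X₁) = deg X₁ (X' \ X₁) - ((X' \ X₁).card : ℤ) :=
          deg_insert_left haX₁ (fun y hy => hltX' y (Finset.mem_sdiff.mp hy).1)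
        have h2 : deg Y (insert a X₁) = deg Y X₁ + Y.card :=
          deg_insert_right haX₁ hltY
        have h3 : ((X' \ X₁).card : ℤ) = (X'.card : ℤ) - k := by
          have h4 : (X' \ X₁).card = X'.card - X₁.card := Finset.card_sdiff_of_subset hsub
          have h5 : X₁.card ≤ X'.card := Finset.card_le_card hsub
          omega
        rw [hsd, h1, h2, h3, ← zpow_add₀ q_ne_zero]
        congr 1
        rw [Finset.card_insert_of_notMem haX']
        push_cast
        ring
    have ih1 := ih (X'.card + Y.card) (by omega) X' Y hXY' rfl (k+1)
    have ih2 := ih (X'.card + Y.card) (by omega) X' Y hXY' rfl k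
    have hT : ∀ j : ℕ, ∑ Y₂ ∈ Y.powersetCard j, q ^ (deg (Y \ Y₂) Y₂ + deg Y₂ X')
        = q ^ (-(j:ℤ)) * ∑ Y₂ ∈ Y.powersetCard j, q ^ (deg (Y \ Y₂) Y₂ + deg Y₂ X) := by
      intro j
      rw [Finset.mul_sum]
      refine Finset.sum_congr rfl fun Y₂ hY₂ => ?_
      obtain ⟨hsub, hcardY₂⟩ := Finset.mem_powersetCard.mp hY₂
      have hd : deg Y₂ X = deg Y₂ X' + Y₂.card := by
        rw [hXins]
        exact deg_insert_right haX' (fun x hx => hltY x (hsub hx))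
      rw [hd, hcardY₂, ← zpow_add₀ q_ne_zero]
      congr 1
      ring
    simp only [hT] at ih1 ih2
    rw [hL, ih1, ih2]
    have hl : (X'.card : ℤ) - (Y.card : ℤ) = ((X.card:ℤ) - (Y.card:ℤ)) - 1 := by omega
    rw [hl]
    exact sumA ((X.card:ℤ) - (Y.card:ℤ)) k _
  · -- a ∈ Y
    have haY : a ∈ Y := by
      rcases Finset.mem_union.mp haU with h | h
      · exact absurd h haX
      · exact h
    set Y' := Y.erase a with hY'def
    have haY' : a ∉ Y' := Finset.notMem_erase a Y
    have hYins : Y = insert a Y' := (Finset.insert_erase haY).symm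
    have hcard : Y.card = Y'.card + 1 := by
      rw [hYins, Finset.card_insert_of_notMem haY']
    have hltY' : ∀ y ∈ Y', y < a := fun y hy =>
      lt_of_le_of_ne (hamax y (Finset.mem_union_right _ (Finset.erase_subset a Y hy)))
        (Finset.ne_of_mem_erase hy)
    have hltX : ∀ x ∈ X, x < a := fun x hx =>
      lt_of_le_of_ne (hamax x (Finset.mem_union_left _ hx)) (fun h => haX (h ▸ hx))
    have hXY' : Disjoint X Y' := Finset.disjoint_of_subset_right (Finset.erase_subset a Y) hXY
    have hL : ∑ X₁ ∈ X.powersetCard (k+1), q ^ (deg X₁ (X \ X₁) + deg Y X₁)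
        = q ^ (-((k+1:ℕ):ℤ)) * ∑ X₁ ∈ X.powersetCard (k+1), q ^ (deg X₁ (X \ X₁) + deg Y' X₁) := by
      rw [Finset.mul_sum]
      refine Finset.sum_congr rfl fun X₁ hX₁ => ?_
      obtain ⟨hsub, hcardX₁⟩ := Finset.mem_powersetCard.mp hX₁
      have haX₁ : a ∉ X₁ := fun hc => haX (hsub hc)
      have hd : deg Y X₁ = deg Y' X₁ - X₁.card := by
        rw [hYins]
        exact deg_insert_left haY' (fun x hx => hltX x (hsub hx))
      rw [hd, hcardX₁, ← zpow_add₀ q_ne_zero]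
      congr 1
      ring
    have ih1 := ih (X.card + Y'.card) (by omega) X Y' hXY' rfl (k+1)
    rw [hL, ih1]
    have hl : (X.card : ℤ) - (Y'.card : ℤ) = ((X.card:ℤ) - (Y.card:ℤ)) + 1 := by omega
    rw [hl]
    have hR0 : (∑ Y₂ ∈ Y.powersetCard 0, q ^ (deg (Y \ Y₂) Y₂ + deg Y₂ X))
        = ∑ Y₂ ∈ Y'.powersetCard 0, q ^ (deg (Y' \ Y₂) Y₂ + deg Y₂ X) := by
      rw [Finset.powersetCard_zero, Finset.powersetCard_zero, Finset.sum_singleton,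
        Finset.sum_singleton]
      simp
    have hRs : ∀ i : ℕ, (∑ Y₂ ∈ Y.powersetCard (i+1), q ^ (deg (Y \ Y₂) Y₂ + deg Y₂ X))
        = q ^ (-((i:ℤ)+1)) * ∑ Y₂ ∈ Y'.powersetCard (i+1), q ^ (deg (Y' \ Y₂) Y₂ + deg Y₂ X)
          + q ^ (-((X.card:ℤ) - (Y.card:ℤ))-((i:ℤ)+1)) *
            ∑ Y₂ ∈ Y'.powersetCard i, q ^ (deg (Y' \ Y₂) Y₂ + deg Y₂ X) := by
      intro i
      nth_rewrite 1 [hYins]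
      rw [sum_powersetCard_insert haY' i]
      congr 1
      · rw [Finset.mul_sum]
        refine Finset.sum_congr rfl fun Y₂ hY₂ => ?_
        obtain ⟨hsub, hcardY₂⟩ := Finset.mem_powersetCard.mp hY₂
        have haY₂ : a ∉ Y₂ := fun hc => haY' (hsub hc)
        have hsd : Y \ Y₂ = insert a (Y' \ Y₂) := by
          rw [hYins]; exact Finset.insert_sdiff_of_notMem Y' haY₂
        have hna : a ∉ Y' \ Y₂ := fun hc => haY' (Finset.mem_sdiff.mp hc).1
        have hd : deg (insert a (Y' \ Y₂)) Y₂ = deg (Y' \ Y₂) Y₂ - (Y₂.card : ℤ) :=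
          deg_insert_left hna (fun y hy => hltY' y (hsub hy))
        rw [hsd, hd, hcardY₂, ← zpow_add₀ q_ne_zero]
        congr 1
        push_cast
        ring
      · rw [Finset.mul_sum]
        refine Finset.sum_congr rfl fun Y₂ hY₂ => ?_
        obtain ⟨hsub, hcardY₂⟩ := Finset.mem_powersetCard.mp hY₂
        have haY₂ : a ∉ Y₂ := fun hc => haY' (hsub hc)
        have hsd : Y \ insert a Y₂ = Y' \ Y₂ := by
          rw [hYins]
          ext x
          simp only [Finset.mem_sdiff, Finset.mem_insert, not_or]
          constructor
          · rintro ⟨hx1 | hx2, hx3, hx4⟩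
            · exact absurd hx1 hx3
            · exact ⟨hx2, hx4⟩
          · rintro ⟨hx1, hx2⟩
            exact ⟨Or.inr hx1, fun he => haY' (he ▸ hx1), hx2⟩
        have h1 : deg (Y' \ Y₂) (insert a Y₂) = deg (Y' \ Y₂) Y₂ + ((Y' \ Y₂).card : ℤ) :=
          deg_insert_right haY₂ (fun y hy => hltY' y (Finset.mem_sdiff.mp hy).1)
        have h2 : deg (insert a Y₂) X = deg Y₂ X - (X.card : ℤ) :=
          deg_insert_left haY₂ hltX
        have h3 : ((Y' \ Y₂).card : ℤ) = (Y'.card : ℤ) - i := by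
          have h4 : (Y' \ Y₂).card = Y'.card - Y₂.card := Finset.card_sdiff_of_subset hsub
          have h5 : Y₂.card ≤ Y'.card := Finset.card_le_card hsub
          omega
        rw [hsd, h1, h2, h3, ← zpow_add₀ q_ne_zero]
        congr 1
        rw [hcard]
        push_cast
        ring
    have := sumB ((X.card:ℤ) - (Y.card:ℤ)) (k+1)
      (fun j => ∑ Y₂ ∈ Y'.powersetCard j, q ^ (deg (Y' \ Y₂) Y₂ + deg Y₂ X))
      (fun j => ∑ Y₂ ∈ Y.powersetCard j, q ^ (deg (Y \ Y₂) Y₂ + deg Y₂ X))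
      hR0 hRs
    exact this

/-- The key lemma: for disjoint `X, Y ⊆ {1, …, M}` with `#X = #Y + l` and any `k₁`,
`∑_{X = X₁ ⊔ X₂, #X₁ = k₁} q^{d(X₁,X₂) + d(Y,X₁)}
  = ∑_{j₂} ⟨l choose k₁−j₂, l−k₁+j₂⟩_q ∑_{Y = Y₁ ⊔ Y₂, #Y₂ = j₂} q^{d(Y₁,Y₂) + d(Y₂,X)}`,
where all terms with `j₂ > k₁` vanish, so the sum over `j₂` runs over `0 ≤ j₂ ≤ k₁`. -/
theorem key_lemma (M : ℕ) (hM : 0 < M) (X Y : Finset ℤ)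
    (hX : X ⊆ Finset.Icc 1 (M : ℤ)) (hY : Y ⊆ Finset.Icc 1 (M : ℤ))
    (hXY : Disjoint X Y) (l : ℕ) (hcard : X.card = Y.card + l) (k₁ : ℕ) :
    ∑ X₁ ∈ X.powersetCard k₁, q ^ (deg X₁ (X \ X₁) + deg Y X₁) =
      ∑ j₂ ∈ Finset.range (k₁ + 1),
        qBinom ((k₁ : ℤ) - (j₂ : ℤ)) ((l : ℤ) - (k₁ : ℤ) + (j₂ : ℤ)) *
          ∑ Y₂ ∈ Y.powersetCard j₂, q ^ (deg (Y \ Y₂) Y₂ + deg Y₂ X) := by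
  rw [gen (X.card + Y.card) X Y hXY rfl k₁]
  refine Finset.sum_congr rfl fun j₂ hj₂ => ?_
  have hj : j₂ ≤ k₁ := by
    have := Finset.mem_range.mp hj₂
    omega
  congr 1
  rw [show (X.card:ℤ) - (Y.card:ℤ) = (l:ℤ) by omega]
  rw [qbin_eq_qBinom l (k₁ - j₂)]
  congr 1
  · omega
  · omega
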